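/- Let n be a positive integer not divisible by 3, and let k and l be integers with gcd(n, k, l) = 1 satisfying condition (B): n ∣ k+l or n ∣ 2k−l or n ∣ 2l−k. Then E_n(k,l) is a finite cyclic group of order 3n, G_n(k,l) is cyclic of order 3, and the shift automorphism θ of G_n(k,l) is the identity. -/

import Mathlib

namespace CPG

/-- The free group on generators `x_0, …, x_{n-1}` indexed by `ZMod n`. -/
abbrev FG (n : ℕ) := FreeGroup (ZMod n)

/-- The automorphism of the free group sending `x_j` to `x_{j+i}`. -/
def shiftA (n : ℕ) (i : ZMod n) : MulAut (FG n) :=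
  FreeGroup.freeGroupCongr (Equiv.addRight i)

/-- The shift automorphism `θ` of the free group, `x_j ↦ x_{j+1}`. -/
def shiftAut (n : ℕ) : MulAut (FG n) := shiftA n 1

/-- The `θ`-orbit of a word `w`: the relator set of the cyclic presentation `P_n(w)`. -/
def rels (n : ℕ) (w : FG n) : Set (FG n) := Set.range fun i : ZMod n => shiftA n i w

/-- The cyclically presented group `G_n(w)`. -/
abbrev Gp (n : ℕ) (w : FG n) := PresentedGroup (rels n w)

lemma shiftA_shiftA (n : ℕ) (i j : ZMod n) (x : FG n) :
    shiftA n i (shiftA n j x) = shiftA n (j + i) x := by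
  show FreeGroup.map _ (FreeGroup.map _ x) = FreeGroup.map _ x
  rw [FreeGroup.map.comp]
  have h : (⇑(Equiv.addRight i) ∘ ⇑(Equiv.addRight j)) = ⇑(Equiv.addRight (j + i)) := by
    funext z
    simp [add_assoc]
  rw [h]

lemma image_shiftAut_rels (n : ℕ) (w : FG n) :
    (shiftAut n) '' rels n w = rels n w := by
  ext r
  constructor
  · rintro ⟨s, ⟨i, rfl⟩, rfl⟩
    exact ⟨i + 1, (shiftA_shiftA n 1 i w).symm⟩
  · rintro ⟨i, rfl⟩
    refine ⟨shiftA n (i - 1) w, ⟨i - 1, rfl⟩, ?_⟩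
    rw [shiftAut, shiftA_shiftA, sub_add_cancel]

lemma map_normalClosure_rels (n : ℕ) (w : FG n) :
    (Subgroup.normalClosure (rels n w)).map (shiftAut n).toMonoidHom
      = Subgroup.normalClosure (rels n w) := by
  rw [Subgroup.map_normalClosure (rels n w) (shiftAut n).toMonoidHom (shiftAut n).surjective]
  congr 1
  exact image_shiftAut_rels n w

/-- The shift automorphism `θ` of the cyclically presented group `G_n(w)`. -/
def shiftG (n : ℕ) (w : FG n) : MulAut (Gp n w) :=
  QuotientGroup.congr (Subgroup.normalClosure (rels n w)) (Subgroup.normalClosure (rels n w))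
    (shiftAut n) (map_normalClosure_rels n w)

/-- The generator `x_k` (subscript mod `n`). -/
def xg (n : ℕ) (k : ℤ) : FG n := FreeGroup.of (k : ZMod n)

/-- The word `x_0 x_k x_l`. -/
def wkl (n : ℕ) (k l : ℤ) : FG n := xg n 0 * xg n k * xg n l

/-- The cyclically presented group `G_n(k,l) = G_n(x_0 x_k x_l)`. -/
abbrev Gkl (n : ℕ) (k l : ℤ) := Gp n (wkl n k l)

/-- The shift automorphism of `G_n(k,l)`. -/
def shiftKL (n : ℕ) (k l : ℤ) : MulAut (Gkl n k l) := shiftG n (wkl n k l)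

end CPG

namespace CPG

/-- The generator `a` of the free group on `{a, x}` (modeled on `Bool`, `a = of false`). -/
def ga : FreeGroup Bool := FreeGroup.of false

/-- The generator `x` of the free group on `{a, x}` (`x = of true`). -/
def gx : FreeGroup Bool := FreeGroup.of true

/-- The relator set of the presentation `(a, x : a^n, W)`. -/
def rels2 (n : ℕ) (W : FreeGroup Bool) : Set (FreeGroup Bool) := {ga ^ n, W}

/-- The group with presentation `(a, x : a^n, W)`. -/
abbrev E2 (n : ℕ) (W : FreeGroup Bool) := PresentedGroup (rels2 n W)

/-- The image of `a` in `(a, x : a^n, W)`. -/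
def a2 (n : ℕ) (W : FreeGroup Bool) : E2 n W := PresentedGroup.of false

/-- The image of `x` in `(a, x : a^n, W)`. -/
def x2 (n : ℕ) (W : FreeGroup Bool) : E2 n W := PresentedGroup.of true

/-- The relator set of `E_n(k,l) = (a, x : a^n, x a^k x a^(l-k) x a^(-l))`. -/
def relsE (n : ℕ) (k l : ℤ) : Set (FreeGroup Bool) :=
  {ga ^ n, gx * ga ^ k * gx * ga ^ (l - k) * gx * ga ^ (-l)}

/-- The group `E_n(k,l)` with presentation `(a, x : a^n, x a^k x a^(l-k) x a^(-l))`. -/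
abbrev Ekl (n : ℕ) (k l : ℤ) := PresentedGroup (relsE n k l)

/-- The image of `a` in `E_n(k,l)`. -/
def aE (n : ℕ) (k l : ℤ) : Ekl n k l := PresentedGroup.of false

/-- The image of `x` in `E_n(k,l)`. -/
def xE (n : ℕ) (k l : ℤ) : Ekl n k l := PresentedGroup.of true

end CPG



namespace CPGaux
variable {G : Type*} [Group G]

lemma inv_of_mul_eq_one {x y : G} (h : x * y = 1) : y = x⁻¹ := by
  have h2 := congrArg (fun z => x⁻¹ * z) h
  simpa [← mul_assoc] using h2

lemma aux_per (f : ℤ → G) {c : ℤ} (h : ∀ i, f (i + c) = f i) :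
    ∀ (t : ℤ) (i : ℤ), f (i + t * c) = f i := by
  have h' : ∀ i, f (i - c) = f i := fun i => by
    have hh := h (i - c); rw [sub_add_cancel] at hh; exact hh.symm
  intro t
  induction t using Int.induction_on with
  | zero => simp
  | succ t ih =>
      intro i
      have e : i + ((t : ℤ) + 1) * c = i + c + (t : ℤ) * c := by ring
      rw [e, ih, h]
  | pred t ih =>
      intro i
      have e : i + (-(t : ℤ) - 1) * c = i - c + (-(t : ℤ)) * c := by ring
      rw [e, ih, h']

lemma aux_three (f : ℤ → G) (m : ℤ) (h : ∀ i, f i * f (i + m) * f (i + 2 * m) = 1) :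
    ∀ i, f (i + 3 * m) = f i := by
  intro i
  have h1 := h i
  have h2 := h (i + m)
  have e1 : i + m + m = i + 2 * m := by ring
  have e2 : i + m + 2 * m = i + 3 * m := by ring
  rw [e1, e2] at h2
  have hf2m : f (i + 2 * m) = (f i * f (i + m))⁻¹ := CPGaux.inv_of_mul_eq_one h1
  rw [hf2m] at h2
  calc f (i + 3 * m) = f i * (f (i + m) * (f i * f (i + m))⁻¹ * f (i + 3 * m)) := by group
  _ = f i * 1 := by rw [h2]
  _ = f i := mul_one _

lemma aux_all_eq (n : ℕ) (h3 : ¬ (3 ∣ n)) (k l : ℤ)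
    (hgcd : Int.gcd (n : ℤ) (Int.gcd k l) = 1)
    (hB : (n : ℤ) ∣ (k + l) ∨ (n : ℤ) ∣ (2 * k - l) ∨ (n : ℤ) ∣ (2 * l - k))
    (f : ℤ → G) (hper : ∀ i, f (i + (n : ℤ)) = f i)
    (hrel : ∀ i, f i * f (i + k) * f (i + l) = 1) :
    (∀ i, f i = f 0) ∧ (f 0) ^ 3 = 1 := by
  have hpern := aux_per f hper
  have hcong : ∀ a b : ℤ, (n : ℤ) ∣ (b - a) → ∀ i, f (i + b) = f (i + a) := by
    intro a b hd i
    obtain ⟨t, ht⟩ := hd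
    have e : i + b = (i + a) + t * (n : ℤ) := by
      have : b = a + t * (n:ℤ) := by rw [mul_comm t, ← ht]; ring
      rw [this]; ring
    rw [e, hpern]
  have gcd1 : ∀ m m' : ℤ, ((Int.gcd (n:ℤ) m : ℤ) ∣ m') → Int.gcd k l = Int.gcd m m' →
      Int.gcd (n:ℤ) m = 1 := by
    intro m m' hdm' hkl
    have dn : (↑(Int.gcd (n:ℤ) m) : ℤ) ∣ (n:ℤ) := Int.gcd_dvd_left _ _
    have dm : (↑(Int.gcd (n:ℤ) m) : ℤ) ∣ m := Int.gcd_dvd_right _ _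
    have : (↑(Int.gcd (n:ℤ) m) : ℤ) ∣ ((Int.gcd (n:ℤ) (Int.gcd k l) : ℕ) : ℤ) := by
      rw [hkl]
      exact Int.dvd_coe_gcd dn (Int.dvd_coe_gcd dm hdm')
    rw [hgcd] at this
    exact Nat.dvd_one.mp (by exact_mod_cast this)
  have key : ∃ m : ℤ, Int.gcd (n:ℤ) m = 1 ∧ ∀ i, f (i + 3 * m) = f i := by
    rcases hB with hc | hc | hc
    · -- n ∣ k + l  :  relator  f i * f(i+k) * f(i-k) = 1
      refine ⟨k, gcd1 k l (by
        have dn : ((Int.gcd (n:ℤ) k : ℕ) : ℤ) ∣ (n:ℤ) := Int.gcd_dvd_left _ _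
        have dk : ((Int.gcd (n:ℤ) k : ℕ) : ℤ) ∣ k := Int.gcd_dvd_right _ _
        have hdl := (dn.trans hc).sub dk
        simpa using hdl) rfl, ?_⟩
      have R : ∀ j, f j * f (j + k) * f (j + -k) = 1 := by
        intro j
        have hl : f (j + l) = f (j + -k) := hcong (-k) l (by
          have : l - -k = k + l := by ring
          rw [this]; exact hc) j
        rw [← hl]; exact hrel j
      intro i
      have rA := R (i + k)
      have rB := R (i + 2 * k)
      have eA1 : i + k + k = i + 2 * k := by ring
      have eA2 : i + k + -k = i := by ring
      rw [eA1, eA2] at rA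
      have eB1 : i + 2 * k + k = i + 3 * k := by ring
      have eB2 : i + 2 * k + -k = i + k := by ring
      rw [eB1, eB2] at rB
      -- rA : f(i+k) * f(i+2k) * f(i) = 1, rB : f(i+2k) * f(i+3k) * f(i+k) = 1
      have hfi : f i = (f (i + k) * f (i + 2 * k))⁻¹ := CPGaux.inv_of_mul_eq_one rA
      have hfik : f (i + k) = (f (i + 2 * k) * f (i + 3 * k))⁻¹ := CPGaux.inv_of_mul_eq_one rB
      rw [hfi, hfik]; group
    · -- n ∣ 2k - l  :  relator  f i * f(i+k) * f(i+2k) = 1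
      refine ⟨k, gcd1 k l (by
        have dn : ((Int.gcd (n:ℤ) k : ℕ) : ℤ) ∣ (n:ℤ) := Int.gcd_dvd_left _ _
        have dk : ((Int.gcd (n:ℤ) k : ℕ) : ℤ) ∣ k := Int.gcd_dvd_right _ _
        have hdl := (dk.add dk).sub (dn.trans hc)
        have e : k + k - (2*k - l) = l := by ring
        rwa [e] at hdl) rfl, ?_⟩
      refine aux_three f k ?_
      intro i
      have hl : f (i + l) = f (i + 2 * k) := hcong (2*k) l (by
        have : l - 2*k = -(2*k - l) := by ring
        rw [this]; exact hc.neg_right) i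
      rw [← hl]; exact hrel i
    · -- n ∣ 2l - k  :  relator  f i * f(i+2l) * f(i+l) = 1
      refine ⟨l, gcd1 l k (by
        have dn : ((Int.gcd (n:ℤ) l : ℕ) : ℤ) ∣ (n:ℤ) := Int.gcd_dvd_left _ _
        have dl : ((Int.gcd (n:ℤ) l : ℕ) : ℤ) ∣ l := Int.gcd_dvd_right _ _
        have hdl := (dl.add dl).sub (dn.trans hc)
        have e : l + l - (2*l - k) = k := by ring
        rwa [e] at hdl) (Int.gcd_comm k l), ?_⟩
      have R : ∀ j, f j * f (j + 2 * l) * f (j + l) = 1 := by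
        intro j
        have hk : f (j + k) = f (j + 2 * l) := hcong (2*l) k (by
          have : k - 2*l = -(2*l - k) := by ring
          rw [this]; exact hc.neg_right) j
        rw [← hk]; exact hrel j
      intro i
      have rA := R i
      have rB := R (i + l)
      have eB1 : i + l + 2 * l = i + 3 * l := by ring
      have eB2 : i + l + l = i + 2 * l := by ring
      rw [eB1, eB2] at rB
      -- rA : f i * f(i+2l) * f(i+l) = 1, rB : f(i+l) * f(i+3l) * f(i+2l) = 1
      have hfl : f (i + l) = (f i * f (i + 2 * l))⁻¹ := CPGaux.inv_of_mul_eq_one rA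
      rw [hfl] at rB
      calc f (i + 3 * l) = (f i * f (i + 2 * l)) *
            ((f i * f (i + 2 * l))⁻¹ * f (i + 3 * l) * f (i + 2 * l)) * (f (i + 2 * l))⁻¹ := by
            group
      _ = (f i * f (i + 2 * l)) * 1 * (f (i + 2 * l))⁻¹ := by rw [rB]
      _ = f i := by group
  obtain ⟨m, hm1, hm2⟩ := key
  have hco3 : IsCoprime (n : ℤ) 3 := by
    rw [Int.isCoprime_iff_gcd_eq_one]
    have h33 : Nat.Coprime n 3 :=
      Nat.coprime_comm.mp ((Nat.prime_three.coprime_iff_not_dvd).mpr h3)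
    have : ((3:ℤ)) = ((3:ℕ):ℤ) := by norm_num
    rw [this, Int.gcd_natCast_natCast]
    exact h33
  have hcom : IsCoprime (n:ℤ) m := Int.isCoprime_iff_gcd_eq_one.mpr hm1
  obtain ⟨u, v, huv⟩ := hco3.mul_right hcom
  have h1 : ∀ i, f (i + 1) = f i := by
    intro i
    have e : i + 1 = (i + v * (3 * m)) + u * (n:ℤ) := by rw [← huv]; ring
    rw [e, aux_per f hper, aux_per f hm2]
  have hall : ∀ i, f i = f 0 := by
    intro i
    have := aux_per f h1 i 0
    simpa using this
  refine ⟨hall, ?_⟩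
  have hc := hrel 0
  rw [hall (0 + k), hall (0 + l)] at hc
  rw [pow_succ, pow_succ, pow_one]
  exact hc

end CPGaux

namespace CPGaux
open CPG

lemma relG (n : ℕ) (k l : ℤ) (i : ZMod n) :
    (PresentedGroup.of i : Gkl n k l) *
      PresentedGroup.of ((k : ZMod n) + i) * PresentedGroup.of ((l : ZMod n) + i) = 1 := by
  have hmem : shiftA n i (wkl n k l) ∈ Subgroup.normalClosure (rels n (wkl n k l)) :=
    Subgroup.subset_normalClosure ⟨i, rfl⟩
  have h1 : (PresentedGroup.mk (rels n (wkl n k l)) (shiftA n i (wkl n k l))) = 1 :=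
    (QuotientGroup.eq_one_iff _).mpr hmem
  have hs : shiftA n i (wkl n k l) =
      FreeGroup.of i * FreeGroup.of ((k : ZMod n) + i) * FreeGroup.of ((l : ZMod n) + i) := by
    simp [shiftA, wkl, xg]
  rw [hs, map_mul, map_mul] at h1
  exact h1

end CPGaux

namespace CPGaux
open CPG

lemma aE_pow (n : ℕ) (k l : ℤ) : (aE n k l) ^ n = 1 := by
  have h1 : (PresentedGroup.mk (relsE n k l) (ga ^ n)) = 1 :=
    (QuotientGroup.eq_one_iff _).mpr (Subgroup.subset_normalClosure (Set.mem_insert _ _))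
  rw [map_pow] at h1
  exact h1

lemma relW (n : ℕ) (k l : ℤ) :
    xE n k l * (aE n k l) ^ k * xE n k l * (aE n k l) ^ (l - k) * xE n k l *
      (aE n k l) ^ (-l) = 1 := by
  have hm : gx * ga ^ k * gx * ga ^ (l - k) * gx * ga ^ (-l) ∈ relsE n k l :=
    Set.mem_insert_of_mem _ rfl
  have h1 : (PresentedGroup.mk (relsE n k l)
      (gx * ga ^ k * gx * ga ^ (l - k) * gx * ga ^ (-l))) = 1 :=
    (QuotientGroup.eq_one_iff _).mpr (Subgroup.subset_normalClosure hm)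
  simp only [map_mul, map_zpow] at h1
  exact h1

lemma liftE_ok (n : ℕ) (k l : ℤ) :
    ∀ r ∈ relsE n k l,
      FreeGroup.lift (fun b : Bool => Multiplicative.ofAdd
        (cond b ((n : ZMod (3 * n))) 3)) r = 1 := by
  intro r hr
  rcases hr with rfl | hr
  · simp only [ga, map_pow, FreeGroup.lift_apply_of, cond_false]
    show Multiplicative.ofAdd (3 : ZMod (3 * n)) ^ n = 1
    rw [← ofAdd_nsmul]
    have h0 : n • (3 : ZMod (3 * n)) = 0 := by
      rw [nsmul_eq_mul]
      have e : ((n : ZMod (3 * n)) * 3) = ((3 * n : ℕ) : ZMod (3 * n)) := by push_cast; ring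
      rw [e, ZMod.natCast_self]
    rw [h0, ofAdd_zero]
  · rw [Set.mem_singleton_iff] at hr; subst hr
    simp only [gx, ga, map_mul, map_zpow, FreeGroup.lift_apply_of, cond_true, cond_false,
      ← ofAdd_zsmul, ← ofAdd_add]
    have h0 : ((n : ZMod (3 * n)) + k • (3 : ZMod (3 * n)) + (n : ZMod (3 * n))
        + (l - k) • (3 : ZMod (3 * n)) + (n : ZMod (3 * n)) + (-l) • (3 : ZMod (3 * n)))
        = 0 := by
      have h1 : ((3 * n : ℕ) : ZMod (3 * n)) = 0 := ZMod.natCast_self _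
      push_cast at h1 ⊢
      simp only [zsmul_eq_mul]
      push_cast
      linear_combination h1
    rw [h0, ofAdd_zero]

lemma G_main (n : ℕ) (hn : 0 < n) (h3 : ¬ (3 ∣ n)) (k l : ℤ)
    (hgcd : Int.gcd (n : ℤ) (Int.gcd k l) = 1)
    (hB : (n : ℤ) ∣ (k + l) ∨ (n : ℤ) ∣ (2 * k - l) ∨ (n : ℤ) ∣ (2 * l - k)) :
    (∀ j : ZMod n, (PresentedGroup.of j : Gkl n k l) = PresentedGroup.of 0) ∧
    (PresentedGroup.of (0 : ZMod n) : Gkl n k l) ^ 3 = 1 := by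
  haveI : NeZero n := ⟨hn.ne'⟩
  set f : ℤ → Gkl n k l := fun j => PresentedGroup.of ((j : ZMod n)) with hf
  have hper : ∀ i : ℤ, f (i + (n : ℤ)) = f i := by
    intro i
    have e : ((i + (n : ℤ) : ℤ) : ZMod n) = ((i : ℤ) : ZMod n) := by
      push_cast [ZMod.natCast_self]; ring
    simp only [hf, e]
  have hrel : ∀ i : ℤ, f i * f (i + k) * f (i + l) = 1 := by
    intro i
    have e1 : ((i + k : ℤ) : ZMod n) = (k : ZMod n) + (i : ZMod n) := by push_cast; ring
    have e2 : ((i + l : ℤ) : ZMod n) = (l : ZMod n) + (i : ZMod n) := by push_cast; ring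
    simp only [hf, e1, e2]
    exact relG n k l (i : ZMod n)
  obtain ⟨hall, hcube⟩ := aux_all_eq n h3 k l hgcd hB f hper hrel
  constructor
  · intro j
    have hj : (((j.val : ℤ) : ZMod n)) = j := by
      push_cast
      exact ZMod.natCast_rightInverse j
    have h := hall (j.val : ℤ)
    simp only [hf] at h
    rw [hj] at h
    simpa using h
  · simpa [hf] using hcube

lemma E_main (n : ℕ) (hn : 0 < n) (h3 : ¬ (3 ∣ n)) (k l : ℤ)
    (hgcd : Int.gcd (n : ℤ) (Int.gcd k l) = 1)
    (hB : (n : ℤ) ∣ (k + l) ∨ (n : ℤ) ∣ (2 * k - l) ∨ (n : ℤ) ∣ (2 * l - k)) :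
    aE n k l * xE n k l = xE n k l * aE n k l ∧ (xE n k l) ^ 3 = 1 := by
  have hA := aE_pow n k l
  have hW := relW n k l
  have hAn : (aE n k l) ^ (n : ℤ) = 1 := by rw [zpow_natCast, hA]
  set A := aE n k l with hAdef
  set X := xE n k l with hXdef
  set f : ℤ → Ekl n k l := fun i => A ^ i * X * (A ^ i)⁻¹ with hf
  have hper : ∀ i : ℤ, f (i + (n : ℤ)) = f i := by
    intro i
    have e : A ^ (i + (n : ℤ)) = A ^ i := by rw [zpow_add, hAn, mul_one]
    simp only [hf, e]
  have hrel : ∀ i : ℤ, f i * f (i + k) * f (i + l) = 1 := by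
    intro i
    simp only [hf]
    have key : A ^ i * X * (A ^ i)⁻¹ * (A ^ (i + k) * X * (A ^ (i + k))⁻¹) *
        (A ^ (i + l) * X * (A ^ (i + l))⁻¹) =
        A ^ i * (X * A ^ k * X * A ^ (l - k) * X * A ^ (-l)) * (A ^ i)⁻¹ := by
      group
    rw [key, hW]
    group
  obtain ⟨hall, hcube⟩ := aux_all_eq n h3 k l hgcd hB f hper hrel
  have hf0 : f 0 = X := by simp [hf]
  have hf1 : f 1 = A * X * A⁻¹ := by simp [hf]
  constructor
  · have h : A * X * A⁻¹ = X := by rw [← hf1, hall 1, hf0]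
    calc A * X = (A * X * A⁻¹) * A := by group
    _ = X * A := by rw [h]
  · rw [hf0] at hcube; exact hcube

end CPGaux

/-- Under condition (B) with `gcd(n,k,l) = 1` and `3 ∤ n`, the group
`E_n(k,l)` is finite cyclic of order `3n`, `G_n(k,l)` is cyclic of order `3`, and the
shift is the identity. -/
theorem statement11 (n : ℕ) (hn : 0 < n) (h3 : ¬ (3 ∣ n)) (k l : ℤ)
    (hgcd : Int.gcd (n : ℤ) (Int.gcd k l) = 1)
    (hB : (n : ℤ) ∣ (k + l) ∨ (n : ℤ) ∣ (2 * k - l) ∨ (n : ℤ) ∣ (2 * l - k)) :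
    IsCyclic (CPG.Ekl n k l) ∧ Nat.card (CPG.Ekl n k l) = 3 * n ∧
    IsCyclic (CPG.Gkl n k l) ∧ Nat.card (CPG.Gkl n k l) = 3 ∧
    CPG.shiftKL n k l = 1 := by
  haveI : NeZero n := ⟨hn.ne'⟩
  obtain ⟨hallG, hcubeG⟩ := CPGaux.G_main n hn h3 k l hgcd hB
  obtain ⟨hcommE, hX3⟩ := CPGaux.E_main n hn h3 k l hgcd hB
  -- ==== G conclusions ====
  have htopG : ∀ y : CPG.Gkl n k l,
      y ∈ Subgroup.zpowers (PresentedGroup.of (0 : ZMod n) : CPG.Gkl n k l) := by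
    intro y
    refine PresentedGroup.generated_by _ _ (fun j => ?_) y
    rw [hallG j]; exact Subgroup.mem_zpowers _
  have hφok : ∀ r ∈ CPG.rels n (CPG.wkl n k l),
      FreeGroup.lift (fun _ : ZMod n => Multiplicative.ofAdd (1 : ZMod 3)) r = 1 := by
    rintro r ⟨i, rfl⟩
    have hs : CPG.shiftA n i (CPG.wkl n k l) =
        FreeGroup.of i * FreeGroup.of ((k : ZMod n) + i) * FreeGroup.of ((l : ZMod n) + i) := by
      simp [CPG.shiftA, CPG.wkl, CPG.xg]
    simp only [hs, map_mul, FreeGroup.lift_apply_of]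
    decide
  have hg0im : (PresentedGroup.toGroup hφok) (PresentedGroup.of (0 : ZMod n) : CPG.Gkl n k l)
      = Multiplicative.ofAdd (1 : ZMod 3) := PresentedGroup.toGroup.of hφok
  have hordg0 : orderOf (PresentedGroup.of (0 : ZMod n) : CPG.Gkl n k l) = 3 := by
    refine Nat.dvd_antisymm (orderOf_dvd_of_pow_eq_one hcubeG) ?_
    have h2 : orderOf ((PresentedGroup.toGroup hφok)
        (PresentedGroup.of (0 : ZMod n) : CPG.Gkl n k l)) = 3 := by
      rw [hg0im, orderOf_ofAdd_eq_addOrderOf, ZMod.addOrderOf_one]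
    rw [← h2]
    exact orderOf_map_dvd _ _
  have hzpG : Subgroup.zpowers (PresentedGroup.of (0 : ZMod n) : CPG.Gkl n k l) = ⊤ :=
    (Subgroup.eq_top_iff' _).mpr htopG
  have hcardG : Nat.card (CPG.Gkl n k l) = 3 := by
    rw [← Subgroup.card_top, ← hzpG, Nat.card_zpowers, hordg0]
  have hcycG : IsCyclic (CPG.Gkl n k l) := ⟨⟨_, htopG⟩⟩
  -- ==== shift ====
  have hshift : CPG.shiftKL n k l = 1 := by
    apply MulEquiv.toMonoidHom_injective
    refine PresentedGroup.ext fun j => ?_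
    show CPG.shiftKL n k l (PresentedGroup.of j) = (1 : MulAut (CPG.Gkl n k l)) (PresentedGroup.of j)
    have e : CPG.shiftAut n (FreeGroup.of j) = FreeGroup.of (j + 1) := by
      simp [CPG.shiftAut, CPG.shiftA]
    calc (CPG.shiftKL n k l) (PresentedGroup.of j)
        = PresentedGroup.mk (CPG.rels n (CPG.wkl n k l)) (CPG.shiftAut n (FreeGroup.of j)) :=
          QuotientGroup.congr_mk _ _ (CPG.shiftAut n)
            (CPG.map_normalClosure_rels n (CPG.wkl n k l)) (FreeGroup.of j)
      _ = (PresentedGroup.of (j + 1) : CPG.Gkl n k l) := by rw [e]; rfl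
      _ = PresentedGroup.of j := (hallG (j + 1)).trans (hallG j).symm
  -- ==== E conclusions ====
  have hA := CPGaux.aE_pow n k l
  have hcommXA : Commute (CPG.xE n k l) (CPG.aE n k l) := hcommE.symm
  have hgEn : (CPG.xE n k l * CPG.aE n k l) ^ n = (CPG.xE n k l) ^ n := by
    rw [hcommXA.mul_pow, hA, mul_one]
  have hXmod : (CPG.xE n k l) ^ n = (CPG.xE n k l) ^ (n % 3) := by
    have e : n = 3 * (n / 3) + n % 3 := (Nat.div_add_mod n 3).symm
    calc (CPG.xE n k l) ^ n = (CPG.xE n k l) ^ (3 * (n / 3) + n % 3) := by rw [← e]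
    _ = ((CPG.xE n k l) ^ 3) ^ (n / 3) * (CPG.xE n k l) ^ (n % 3) := by rw [pow_add, pow_mul]
    _ = (CPG.xE n k l) ^ (n % 3) := by rw [hX3, one_pow, one_mul]
  have hXin : CPG.xE n k l ∈ Subgroup.zpowers (CPG.xE n k l * CPG.aE n k l) := by
    have h1 : (CPG.xE n k l) ^ (n % 3) ∈ Subgroup.zpowers (CPG.xE n k l * CPG.aE n k l) := by
      rw [← hXmod, ← hgEn]
      exact Subgroup.pow_mem _ (Subgroup.mem_zpowers _) n
    have hm : n % 3 = 1 ∨ n % 3 = 2 := by omega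
    rcases hm with hm | hm
    · rwa [hm, pow_one] at h1
    · rw [hm] at h1
      have h2 := Subgroup.mul_mem _ h1 h1
      have e : (CPG.xE n k l) ^ 2 * (CPG.xE n k l) ^ 2 = CPG.xE n k l := by
        rw [← pow_add]
        show (CPG.xE n k l) ^ 4 = _
        rw [show (4 : ℕ) = 3 + 1 from rfl, pow_add, hX3, one_mul, pow_one]
      rwa [e] at h2
  have hAin : CPG.aE n k l ∈ Subgroup.zpowers (CPG.xE n k l * CPG.aE n k l) := by
    have h2 := Subgroup.mul_mem _ (Subgroup.inv_mem _ hXin)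
      (Subgroup.mem_zpowers (CPG.xE n k l * CPG.aE n k l))
    simpa using h2
  have htopE : ∀ y : CPG.Ekl n k l,
      y ∈ Subgroup.zpowers (CPG.xE n k l * CPG.aE n k l) := by
    intro y
    refine PresentedGroup.generated_by _ _ (fun j => ?_) y
    cases j
    · exact hAin
    · exact hXin
  have hgE3n : (CPG.xE n k l * CPG.aE n k l) ^ (3 * n) = 1 := by
    rw [hcommXA.mul_pow, pow_mul, hX3, one_pow, one_mul, mul_comm 3 n, pow_mul, hA, one_pow]
  have hcop : Nat.gcd (3 * n) (n + 3) = 1 := by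
    have co3 : Nat.Coprime 3 (n + 3) := (Nat.prime_three.coprime_iff_not_dvd).mpr (by omega)
    have con : Nat.Coprime n (n + 3) := by
      rw [show n + 3 = 3 + n from by ring, Nat.coprime_add_self_right]
      exact Nat.coprime_comm.mp ((Nat.prime_three.coprime_iff_not_dvd).mpr h3)
    exact Nat.Coprime.mul co3 con
  have hφX : (PresentedGroup.toGroup (CPGaux.liftE_ok n k l)) (CPG.xE n k l)
      = Multiplicative.ofAdd ((n : ZMod (3 * n))) := PresentedGroup.toGroup.of _
  have hφA : (PresentedGroup.toGroup (CPGaux.liftE_ok n k l)) (CPG.aE n k l)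
      = Multiplicative.ofAdd ((3 : ZMod (3 * n))) := PresentedGroup.toGroup.of _
  have hordφ : orderOf ((PresentedGroup.toGroup (CPGaux.liftE_ok n k l))
      (CPG.xE n k l * CPG.aE n k l)) = 3 * n := by
    rw [map_mul, hφX, hφA, ← ofAdd_add, orderOf_ofAdd_eq_addOrderOf]
    have e : ((n : ZMod (3 * n)) + 3) = ((n + 3 : ℕ) : ZMod (3 * n)) := by push_cast; ring
    rw [e, ZMod.addOrderOf_coe _ (by omega : 3 * n ≠ 0), hcop, Nat.div_one]
  have hordE : orderOf (CPG.xE n k l * CPG.aE n k l) = 3 * n := by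
    refine Nat.dvd_antisymm (orderOf_dvd_of_pow_eq_one hgE3n) ?_
    rw [← hordφ]
    exact orderOf_map_dvd _ _
  have hzpE : Subgroup.zpowers (CPG.xE n k l * CPG.aE n k l) = ⊤ :=
    (Subgroup.eq_top_iff' _).mpr htopE
  have hcardE : Nat.card (CPG.Ekl n k l) = 3 * n := by
    rw [← Subgroup.card_top, ← hzpE, Nat.card_zpowers, hordE]
  exact ⟨⟨⟨_, htopE⟩⟩, hcardE, hcycG, hcardG, hshift⟩
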